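/- For all α ∈ (0, 1/2), the strict inequality 2·H(α) > H(α) + (1-α)·H(α/(1-α)) holds, where H is the binary entropy function. Equivalently, H(α) > (1-α)·H(α/(1-α)). -/

import Mathlib

/-- The binary entropy function. -/
noncomputable def binEnt (x : ℝ) : ℝ := -x * Real.logb 2 x - (1 - x) * Real.logb 2 (1 - x)

lemma binEnt_eq (x : ℝ) : binEnt x = Real.binEntropy x / Real.log 2 := by
  rw [binEnt, Real.binEntropy, Real.log_inv, Real.log_inv, Real.logb, Real.logb]
  ring

/-- For `α ∈ (0, 1/2)`, `2 H(α) > H(α) + (1-α) H(α/(1-α))`. -/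
theorem two_entropy_gt (a : ℝ) (ha0 : 0 < a) (ha2 : a < 1 / 2) :
    2 * binEnt a > binEnt a + (1 - a) * binEnt (a / (1 - a)) := by
  have h1a : 0 < 1 - a := by linarith
  set b : ℝ := a / (1 - a) with hb
  have hb0 : 0 < b := div_pos ha0 h1a
  have hb1 : b < 1 := (div_lt_one h1a).2 (by linarith)
  have key : Real.binEntropy a > a * Real.binEntropy 0 + (1 - a) * Real.binEntropy b := by
    have := Real.strictConcave_binEntropy.2 (x := 0) (y := b)
      ⟨le_refl 0, by norm_num⟩ ⟨hb0.le, hb1.le⟩ (ne_of_lt hb0) ha0 h1a (by ring)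
    have hab : a • (0:ℝ) + (1 - a) • b = a := by
      rw [hb]; simp only [smul_eq_mul, mul_zero, zero_add]; field_simp
    rwa [hab] at this
  simp only [Real.binEntropy_zero, mul_zero, zero_add] at key
  have hlog2 : (0:ℝ) < Real.log 2 := Real.log_pos (by norm_num)
  rw [binEnt_eq, binEnt_eq]
  have h : (1 - a) * (Real.binEntropy b / Real.log 2) = ((1 - a) * Real.binEntropy b) / Real.log 2 := by ring
  rw [gt_iff_lt, h]
  have h2 : ((1 - a) * Real.binEntropy b) / Real.log 2 < Real.binEntropy a / Real.log 2 :=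
    div_lt_div_of_pos_right key hlog2
  linarith
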